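/- Let H be a complex Hilbert space, G a selfadjoint continuous linear operator on H, and K : ℝ → (H →L[ℂ] H) a family of continuous linear operators with K(t) selfadjoint for each t. Suppose that at a point x the family K has derivative K'(x) (in operator norm), that φ : ℝ → H has derivative φ'(x) at x, that β : ℝ → ℝ has derivative β'(x) at x, and that K(t)(φ(t)) = β(t) • G(φ(t)) for all t in a neighborhood of x. Then β'(x) · ⟪φ(x), G(φ(x))⟫ = ⟪φ(x), K'(x)(φ(x))⟫. -/

import Mathlib

open scoped ComplexInnerProductSpace

/-- Hellmann–Feynman-type formula `dβ/dx · (φ, G φ) = (φ, K' φ)` for a real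
eigenvalue branch of the pencil `K(x) φ = β G φ`. -/
theorem eigenvalue_derivative_formula
    {H : Type*} [NormedAddCommGroup H] [InnerProductSpace ℂ H] [CompleteSpace H]
    (G : H →L[ℂ] H) (hG : ∀ f g : H, ⟪G f, g⟫ = ⟪f, G g⟫)
    (K : ℝ → (H →L[ℂ] H)) (hKsa : ∀ t : ℝ, ∀ f g : H, ⟪K t f, g⟫ = ⟪f, K t g⟫)
    (x : ℝ) (K' : H →L[ℂ] H) (hK : HasDerivAt K K' x)
    (φ : ℝ → H) (φ'x : H) (hφ : HasDerivAt φ φ'x x)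
    (β : ℝ → ℝ) (β'x : ℝ) (hβ : HasDerivAt β β'x x)
    (heq : ∀ᶠ t in nhds x, K t (φ t) = ((β t : ℂ)) • G (φ t)) :
    (β'x : ℂ) * ⟪φ x, G (φ x)⟫ = ⟪φ x, K' (φ x)⟫ := by
  -- derivative of LHS
  have hKr : HasDerivAt (fun t => (K t).restrictScalars ℝ) (K'.restrictScalars ℝ) x := by
    have hL := (ContinuousLinearMap.restrictScalarsL ℂ H H ℝ ℝ).hasFDerivAt (x := K x)
    exact (hL.comp_hasDerivAt x hK)
  have h1 : HasDerivAt (fun t => K t (φ t)) (K' (φ x) + K x φ'x) x := by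
    have := hKr.clm_apply hφ
    simpa using this
  have hβc : HasDerivAt (fun t => (β t : ℂ)) (β'x : ℂ) x := hβ.ofReal_comp
  have hGφ : HasDerivAt (fun t => G (φ t)) (G φ'x) x := by
    exact (G.restrictScalars ℝ).hasFDerivAt.comp_hasDerivAt x hφ
  have h2 : HasDerivAt (fun t => (β t : ℂ) • G (φ t))
      ((β'x : ℂ) • G (φ x) + (β x : ℂ) • G φ'x) x := by
    simpa [add_comm, Pi.smul_def'] using hβc.smul hGφ
  have h1' : HasDerivAt (fun t => (β t : ℂ) • G (φ t)) (K' (φ x) + K x φ'x) x :=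
    h1.congr_of_eventuallyEq (heq.mono fun t ht => ht.symm)
  have hEq : K' (φ x) + K x φ'x = (β'x : ℂ) • G (φ x) + (β x : ℂ) • G φ'x :=
    h1'.unique h2
  have hx : K x (φ x) = (β x : ℂ) • G (φ x) := heq.self_of_nhds
  have hcross : ⟪φ x, K x φ'x⟫ = (β x : ℂ) * ⟪φ x, G φ'x⟫ := by
    rw [← hKsa x, hx, inner_smul_left, hG]
    simp [Complex.conj_ofReal]
  have := congrArg (fun v => ⟪φ x, v⟫) hEq
  simp only [inner_add_right, inner_smul_right, hcross] at this
  linear_combination -this
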